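/- Let u be a node whose neighborhood graph N_u consists of a clique of size c together with b isolated vertices (so d_u = b + c). Then for 3 ≤ ℓ ≤ c, the ℓth-order local clustering coefficient equals C_ℓ(u) = (c - ℓ + 1)/(c + b - ℓ + 1), and C_2(u) = (c-1)c/((b+c-1)(b+c)). Consequently, as d_u → ∞ with c/(c+b) → α, C_2(u) → α² and C_ℓ(u) → α, so the upper bound C_ℓ(u) = √(C_2(u)) is attained in the limit. -/

import Mathlib

open Filter

/-- The number of `j`-cliques in a graph `H` (thought of as the neighborhood graph `N_u`). -/
noncomputable def cliqueCount {V : Type*} [Fintype V] (H : SimpleGraph V) (j : ℕ) : ℕ :=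
  {s : Finset V | H.IsNClique j s}.ncard

/-- The local `ℓ`th-order clustering coefficient of a node whose neighborhood graph is `H`
(on `d_u = |V|` vertices): `C_ℓ(u) = ℓ·|K_ℓ(N_u)| / ((d_u - ℓ + 1)·|K_{ℓ-1}(N_u)|)`. -/
noncomputable def nbrLocalCC {V : Type*} [Fintype V] (H : SimpleGraph V) (ℓ : ℕ) : ℝ :=
  ((ℓ : ℝ) * cliqueCount H ℓ) /
    ((((Fintype.card V : ℝ)) - ℓ + 1) * cliqueCount H (ℓ - 1))

lemma cliqueCount_eq_choose {V : Type*} [Fintype V] [DecidableEq V] (H : SimpleGraph V)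
    (c : ℕ) (C : Finset V) (hCcard : C.card = c) (hclique : H.IsClique ↑C)
    (hisolated : ∀ v : V, v ∉ C → ∀ w : V, ¬ H.Adj v w)
    (j : ℕ) (hj : 2 ≤ j) :
    cliqueCount H j = c.choose j := by
  have hset : {s : Finset V | H.IsNClique j s} = ↑(C.powersetCard j) := by
    ext s
    simp only [Set.mem_setOf_eq, Finset.mem_coe, Finset.mem_powersetCard,
      SimpleGraph.isNClique_iff]
    constructor
    · rintro ⟨hcl, hcard⟩
      refine ⟨fun v hv => ?_, hcard⟩
      by_contra hvC
      obtain ⟨w, hw, hne⟩ := Finset.exists_mem_ne (by omega : 1 < s.card) v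
      exact hisolated v hvC w (hcl hv hw hne.symm)
    · rintro ⟨hsub, hcard⟩
      exact ⟨hclique.subset (by exact_mod_cast hsub), hcard⟩
  rw [cliqueCount, hset, Set.ncard_coe_finset, Finset.card_powersetCard, hCcard]

lemma cliqueCount_one {V : Type*} [Fintype V] [DecidableEq V] (H : SimpleGraph V) :
    cliqueCount H 1 = Fintype.card V := by
  have hset : {s : Finset V | H.IsNClique 1 s} =
      ↑(Finset.univ.image (fun v : V => ({v} : Finset V))) := by
    ext s
    simp [SimpleGraph.isNClique_one, eq_comm]
  rw [cliqueCount, hset, Set.ncard_coe_finset, Finset.card_image_of_injective _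
    (fun a b h => Finset.singleton_injective h), Finset.card_univ]

lemma shift_limit (cs t : ℕ → ℝ) (α k : ℝ)
    (h1 : Tendsto (fun n => cs n / t n) atTop (nhds α))
    (h2 : Tendsto t atTop atTop) :
    Tendsto (fun n => (cs n - k) / (t n - k)) atTop (nhds α) := by
  have htk : Tendsto (fun n => t n - k) atTop atTop :=
    tendsto_atTop_add_const_right _ (-k) h2
  have h0 : Tendsto (fun n => k / (t n - k)) atTop (nhds 0) :=
    Tendsto.div_atTop tendsto_const_nhds htk
  have hr : Tendsto (fun n => t n / (t n - k)) atTop (nhds 1) := by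
    have heq : (fun n => (1 : ℝ) + k / (t n - k)) =ᶠ[atTop]
        (fun n => t n / (t n - k)) := by
      filter_upwards [htk.eventually_ge_atTop 1] with n hn
      have hne : t n - k ≠ 0 := by linarith
      field_simp
      ring
    have := (tendsto_const_nhds.add h0).congr' heq
    simpa using this
  have hmain : (fun n => cs n / t n * (t n / (t n - k)) - k / (t n - k)) =ᶠ[atTop]
      (fun n => (cs n - k) / (t n - k)) := by
    filter_upwards [htk.eventually_ge_atTop 1, h2.eventually_ge_atTop 1] with n hn hn'
    have hne : t n - k ≠ 0 := by linarith
    have hne' : t n ≠ 0 := by linarith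
    field_simp
  have := ((h1.mul hr).sub h0).congr' hmain
  simpa using this

theorem stmt_12 {V : Type*} [Fintype V] [DecidableEq V] (H : SimpleGraph V)
    (b c : ℕ) (C : Finset V) (hCcard : C.card = c) (hclique : H.IsClique ↑C)
    (hisolated : ∀ v : V, v ∉ C → ∀ w : V, ¬ H.Adj v w)
    (hV : Fintype.card V = b + c)
    (ℓ : ℕ) (hℓ3 : 3 ≤ ℓ) (hℓc : ℓ ≤ c) :
    nbrLocalCC H ℓ = ((c : ℝ) - ℓ + 1) / ((c : ℝ) + b - ℓ + 1) ∧
    nbrLocalCC H 2 = ((c : ℝ) - 1) * c / (((b : ℝ) + c - 1) * ((b : ℝ) + c)) ∧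
    (∀ (bs cs : ℕ → ℕ) (α : ℝ),
      Tendsto (fun n => (cs n : ℝ) / ((cs n : ℝ) + (bs n : ℝ))) atTop (nhds α) →
      Tendsto (fun n => (cs n : ℝ) + (bs n : ℝ)) atTop atTop →
      Tendsto (fun n => ((cs n : ℝ) - 1) * (cs n : ℝ) /
          ((((bs n : ℝ) + (cs n : ℝ)) - 1) * ((bs n : ℝ) + (cs n : ℝ)))) atTop (nhds (α ^ 2)) ∧
      Tendsto (fun n => ((cs n : ℝ) - ℓ + 1) / ((cs n : ℝ) + (bs n : ℝ) - ℓ + 1))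
        atTop (nhds α)) := by
  have hc3 : 3 ≤ c := le_trans hℓ3 hℓc
  have hcc := cliqueCount_eq_choose H c C hCcard hclique hisolated
  have hkey : (ℓ : ℝ) * c.choose ℓ = ((c : ℝ) - ℓ + 1) * c.choose (ℓ - 1) := by
    have hnat : c.choose ((ℓ - 1) + 1) * ((ℓ - 1) + 1) = c.choose (ℓ - 1) * (c - (ℓ - 1)) :=
      Nat.choose_succ_right_eq c (ℓ - 1)
    have hℓe : (ℓ - 1) + 1 = ℓ := by omega
    rw [hℓe] at hnat
    have hcast : ((c - (ℓ - 1) : ℕ) : ℝ) = (c : ℝ) - ℓ + 1 := by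
      have : ((ℓ - 1 : ℕ) : ℝ) = (ℓ : ℝ) - 1 := by
        push_cast [Nat.cast_sub (by omega : 1 ≤ ℓ)]; ring
      rw [Nat.cast_sub (by omega : ℓ - 1 ≤ c), this]; ring
    have := congrArg (fun n : ℕ => (n : ℝ)) hnat
    push_cast at this
    rw [Nat.cast_sub (by omega : ℓ - 1 ≤ c), Nat.cast_sub (by omega : 1 ≤ ℓ)] at this
    push_cast at this
    linarith
  have hchoosene : ((c.choose (ℓ - 1) : ℕ) : ℝ) ≠ 0 := by
    have : 0 < c.choose (ℓ - 1) := Nat.choose_pos (by omega)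
    positivity
  refine ⟨?_, ?_, ?_⟩
  · -- general ℓ
    rw [nbrLocalCC, hcc ℓ (by omega), hcc (ℓ - 1) (by omega), hV, hkey]
    rw [mul_div_mul_right _ _ hchoosene]
    push_cast
    ring_nf
  · -- ℓ = 2
    rw [nbrLocalCC, hcc 2 le_rfl, show (2:ℕ)-1 = 1 from rfl, cliqueCount_one H, hV,
      Nat.cast_choose_two]
    have hc3' : (3 : ℝ) ≤ c := by exact_mod_cast hc3
    have hb : (0 : ℝ) ≤ b := Nat.cast_nonneg b
    push_cast
    rw [div_eq_div_iff (by intro h; nlinarith : ((b:ℝ) + c - 2 + 1) * ((b:ℝ) + c) ≠ 0)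
      (by intro h; nlinarith : ((b:ℝ) + c - 1) * ((b:ℝ) + c) ≠ 0)]
    ring
  · -- limits
    intro bs cs α hα hT
    have hT' : Tendsto (fun n => (bs n : ℝ) + (cs n : ℝ)) atTop atTop := by
      simpa [add_comm] using hT
    have hα' : Tendsto (fun n => (cs n : ℝ) / ((bs n : ℝ) + (cs n : ℝ))) atTop (nhds α) := by
      simpa [add_comm] using hα
    constructor
    · have hs := shift_limit (fun n => (cs n : ℝ)) (fun n => (bs n : ℝ) + (cs n : ℝ)) α 1
        hα' hT'
      have := hs.mul hα'
      have heq : (fun n => ((cs n : ℝ) - 1) / ((bs n : ℝ) + (cs n : ℝ) - 1) *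
          ((cs n : ℝ) / ((bs n : ℝ) + (cs n : ℝ)))) =
          (fun n => ((cs n : ℝ) - 1) * (cs n : ℝ) /
          ((((bs n : ℝ) + (cs n : ℝ)) - 1) * ((bs n : ℝ) + (cs n : ℝ)))) := by
        funext n; rw [div_mul_div_comm]
      rw [heq] at this
      simpa [sq] using this
    · have hs := shift_limit (fun n => (cs n : ℝ)) (fun n => (cs n : ℝ) + (bs n : ℝ)) α
        ((ℓ : ℝ) - 1) hα (by simpa using hT)
      have heq : (fun n => ((cs n : ℝ) - ((ℓ : ℝ) - 1)) /
          ((cs n : ℝ) + (bs n : ℝ) - ((ℓ : ℝ) - 1))) =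
          (fun n => ((cs n : ℝ) - ℓ + 1) / ((cs n : ℝ) + (bs n : ℝ) - ℓ + 1)) := by
        funext n; ring_nf
      rwa [heq] at hs
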